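/- For all integers q ≥ 2 and n ≥ 1, the family 𝓔_q is n-cell implementable under scenario (••) if and only if q ≤ C(2n, n). -/

import Mathlib

/-- The alphabet 𝔹• = {0, 1, ∗, •}. -/
inductive BB : Type
  | zero
  | one
  | star
  | reject
deriving DecidableEq

instance : Fintype BB where
  elems := {BB.zero, BB.one, BB.star, BB.reject}
  complete := by intro x; cases x <;> simp

/-- The cell function T : 𝔹• × 𝔹• → 𝔹: T(u,ϑ) = 1 iff u = ∗, or ϑ = ∗,
or u,ϑ ∈ 𝔹 with u = ϑ. -/
def Tcell : BB → BB → Bool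
  | BB.star, _ => true
  | _, BB.star => true
  | BB.zero, BB.zero => true
  | BB.one, BB.one => true
  | _, _ => false

/-- The word-level function T(u,ϑ) = ⋀_{j<n} T(u_j, ϑ_j). -/
def Tword {n : ℕ} (u θ : Fin n → BB) : Bool :=
  decide (∀ j, Tcell (u j) (θ j) = true)

/-- The alphabet 𝔹 = {0,1} ⊆ 𝔹•. -/
def Bcirc : Set BB := {BB.zero, BB.one}

/-- The alphabet 𝔹∗ = {0,1,∗} ⊆ 𝔹•. -/
def Bstar : Set BB := {BB.zero, BB.one, BB.star}

/-- The full alphabet 𝔹•. -/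
def Bdot : Set BB := Set.univ

/-- A family Φ of functions {0,…,q−1} → 𝔹 is n-cell implementable under
scenario (A,B) if there are mappings u : {0,…,q−1} → A^n and ϑ : Φ → B^n
with f(x) = T(u(x), ϑ(f)) for all f ∈ Φ and x. -/
def Implementable (A B : Set BB) (n q : ℕ) (Φ : Set (Fin q → Bool)) : Prop :=
  ∃ u : Fin q → Fin n → BB, ∃ θ : (Fin q → Bool) → Fin n → BB,
    (∀ x j, u x j ∈ A) ∧ (∀ f ∈ Φ, ∀ j, θ f j ∈ B) ∧
    (∀ f ∈ Φ, ∀ x, f x = Tword (u x) (θ f))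

/-- The family 𝓔_q = { x ↦ [x = t] : t ∈ [q⟩ }. -/
def Eset (q : ℕ) : Set (Fin q → Bool) :=
  { f | ∃ t : Fin q, f = fun x => decide (x = t) }

/-- The family 𝓝_q = { x ↦ [x ≠ t] : t ∈ [q⟩ }. -/
def Nset (q : ℕ) : Set (Fin q → Bool) :=
  { f | ∃ t : Fin q, f = fun x => decide (x ≠ t) }

/-- The family 𝓖_q = { x ↦ [x ≥ t] : t ∈ [q⟩ }. -/
def Gset (q : ℕ) : Set (Fin q → Bool) :=
  { f | ∃ t : Fin q, f = fun x => decide (t ≤ x) }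

/-- The family 𝓛_q = { x ↦ [x ≤ t] : t ∈ [q⟩ }. -/
def Lset (q : ℕ) : Set (Fin q → Bool) :=
  { f | ∃ t : Fin q, f = fun x => decide (x ≤ t) }

/-! ### Auxiliary machinery -/

/-- Conflict set on the `u` side: `aS x` is the set of booleans `b` such that
`Tcell x b' = false` where `b'` is the letter encoding `b`. -/
def aS : BB → Finset Bool
  | BB.star => ∅
  | BB.zero => {false}
  | BB.one => {true}
  | BB.reject => Finset.univ

/-- Conflict set on the `θ` side. -/
def bS : BB → Finset Bool
  | BB.star => ∅
  | BB.zero => {true}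
  | BB.one => {false}
  | BB.reject => Finset.univ

lemma Tcell_iff (x y : BB) : Tcell x y = true ↔ ∀ b : Bool, ¬(b ∈ aS x ∧ b ∈ bS y) := by
  revert x y; decide

/-- Letter whose `aS` set is prescribed. -/
def lettA : Bool → Bool → BB
  | false, false => BB.star
  | true, false => BB.zero
  | false, true => BB.one
  | true, true => BB.reject

/-- Letter whose `bS` set is prescribed. -/
def lettB : Bool → Bool → BB
  | false, false => BB.star
  | false, true => BB.zero
  | true, false => BB.one
  | true, true => BB.reject

lemma mem_aS_lettA (m0 m1 b : Bool) : b ∈ aS (lettA m0 m1) ↔ (bif b then m1 else m0) = true := by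
  revert m0 m1 b; decide

lemma mem_bS_lettB (m0 m1 b : Bool) : b ∈ bS (lettB m0 m1) ↔ (bif b then m1 else m0) = true := by
  revert m0 m1 b; decide

lemma Tword_iff {n : ℕ} (u θ : Fin n → BB) :
    Tword u θ = true ↔ ∀ j (b : Bool), ¬(b ∈ aS (u j) ∧ b ∈ bS (θ j)) := by
  simp only [Tword, decide_eq_true_iff]
  constructor
  · intro h j b; exact (Tcell_iff _ _).1 (h j) b
  · intro h j; exact (Tcell_iff _ _).2 (h j)

variable {n : ℕ}

/-- The conflict set of a word, on the `u` side. -/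
def Af (u : Fin n → BB) : Finset (Fin n × Bool) :=
  Finset.univ.filter (fun p => p.2 ∈ aS (u p.1))

/-- The conflict set of a word, on the `θ` side. -/
def Bf (θ : Fin n → BB) : Finset (Fin n × Bool) :=
  Finset.univ.filter (fun p => p.2 ∈ bS (θ p.1))

lemma mem_Af (u : Fin n → BB) (p : Fin n × Bool) : p ∈ Af u ↔ p.2 ∈ aS (u p.1) := by
  simp [Af]

lemma mem_Bf (θ : Fin n → BB) (p : Fin n × Bool) : p ∈ Bf θ ↔ p.2 ∈ bS (θ p.1) := by
  simp [Bf]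

lemma Tword_iff_disjoint (u θ : Fin n → BB) :
    Tword u θ = true ↔ Disjoint (Af u) (Bf θ) := by
  rw [Tword_iff, Finset.disjoint_left]
  constructor
  · intro h p hpA hpB
    exact h p.1 p.2 ⟨(mem_Af u p).1 hpA, (mem_Bf θ p).1 hpB⟩
  · intro h j b ⟨h1, h2⟩
    exact h ((mem_Af u (j, b)).2 h1) ((mem_Bf θ (j, b)).2 h2)

/-- A word with prescribed conflict set on the `u` side. -/
def Aword (S : Finset (Fin n × Bool)) (j : Fin n) : BB :=
  lettA (decide ((j, false) ∈ S)) (decide ((j, true) ∈ S))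

/-- A word with prescribed conflict set on the `θ` side. -/
def Bword (S : Finset (Fin n × Bool)) (j : Fin n) : BB :=
  lettB (decide ((j, false) ∈ S)) (decide ((j, true) ∈ S))

lemma mem_aS_Aword (S : Finset (Fin n × Bool)) (j : Fin n) (b : Bool) :
    b ∈ aS (Aword S j) ↔ (j, b) ∈ S := by
  rw [Aword, mem_aS_lettA]
  cases b <;> simp

lemma mem_bS_Bword (S : Finset (Fin n × Bool)) (j : Fin n) (b : Bool) :
    b ∈ bS (Bword S j) ↔ (j, b) ∈ S := by
  rw [Bword, mem_bS_lettB]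
  cases b <;> simp

lemma Af_Aword (S : Finset (Fin n × Bool)) : Af (Aword S) = S := by
  ext ⟨j, b⟩; rw [mem_Af, mem_aS_Aword]

lemma Bf_Bword (S : Finset (Fin n × Bool)) : Bf (Bword S) = S := by
  ext ⟨j, b⟩; rw [mem_Bf, mem_bS_Bword]

theorem Eset_implementable_rejectReject (q n : ℕ) (hq : 2 ≤ q) (hn : 1 ≤ n) :
    Implementable Bdot Bdot n q (Eset q) ↔ q ≤ (2 * n).choose n := by
  have hcard : Fintype.card (Fin n × Bool) = 2 * n := by
    simp [Fintype.card_prod, mul_comm]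
  constructor
  · rintro ⟨u, θ, -, -, hT⟩
    -- the conflict sets of the `u`-words
    set D : Fin q → Finset (Fin n × Bool) := fun t => Af (u t) with hD
    set B : Fin q → Finset (Fin n × Bool) := fun t => Bf (θ (fun x => decide (x = t))) with hB
    have hmem : ∀ t : Fin q, (fun x => decide (x = t)) ∈ Eset q := fun t => ⟨t, rfl⟩
    have hdisj : ∀ t, Disjoint (D t) (B t) := by
      intro t
      rw [← Tword_iff_disjoint]
      have := (hT _ (hmem t) t).symm
      simpa using this
    have hcross : ∀ s t : Fin q, s ≠ t → ¬ Disjoint (D s) (B t) := by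
      intro s t hst
      rw [← Tword_iff_disjoint]
      have := (hT _ (hmem t) s).symm
      rw [this]
      simp [hst]
    have hnotss : ∀ s t : Fin q, s ≠ t → ¬ D s ⊆ D t := by
      intro s t hst hss
      obtain ⟨p, hp1, hp2⟩ := Finset.not_disjoint_iff.1 (hcross s t hst)
      exact (Finset.disjoint_left.1 (hdisj t)) (hss hp1) hp2
    have hinj : Function.Injective D := by
      intro s t h
      by_contra hst
      exact hnotss s t hst (h ▸ subset_refl _)
    have hanti : IsAntichain (· ⊆ ·) ((Finset.univ.image D : Finset (Finset (Fin n × Bool))) :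
        Set (Finset (Fin n × Bool))) := by
      intro x hx y hy hxy
      simp only [Finset.coe_image, Set.mem_image, Finset.mem_coe, Finset.coe_univ,
        Set.image_univ, Set.mem_range] at hx hy
      obtain ⟨s, rfl⟩ := hx
      obtain ⟨t, rfl⟩ := hy
      exact hnotss s t (fun h => hxy (by rw [h]))
    have := IsAntichain.sperner hanti
    rwa [Finset.card_image_of_injective _ hinj, Finset.card_univ, Fintype.card_fin, hcard,
      Nat.mul_div_cancel_left n (by norm_num)] at this
  · intro hle
    -- choose q distinct n-subsets of Fin n × Bool
    have hcard' : q ≤ Fintype.card {S // S ∈ Finset.powersetCard n (Finset.univ :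
        Finset (Fin n × Bool))} := by
      rw [Fintype.card_coe, Finset.card_powersetCard, Finset.card_univ, hcard]
      simpa using hle
    obtain ⟨e⟩ : Nonempty (Fin q ↪ {S // S ∈ Finset.powersetCard n (Finset.univ :
        Finset (Fin n × Bool))}) :=
      Function.Embedding.nonempty_of_card_le (by rwa [Fintype.card_fin])
    set S : Fin q → Finset (Fin n × Bool) := fun t => (e t).1 with hS
    have hScard : ∀ t, (S t).card = n := by
      intro t
      have := (e t).2
      rw [Finset.mem_powersetCard] at this
      exact this.2
    have hSinj : Function.Injective S := by
      intro s t h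
      exact e.injective (Subtype.ext h)
    refine ⟨fun x => Aword (S x), fun f => if h : ∃ t : Fin q, f = fun x => decide (x = t)
      then Bword ((S h.choose)ᶜ) else fun _ => BB.star, fun _ _ => Set.mem_univ _,
      fun _ _ _ => Set.mem_univ _, ?_⟩
    rintro f hf x
    have h : ∃ t : Fin q, f = fun x => decide (x = t) := hf
    simp only [dif_pos h]
    obtain ht := h.choose_spec
    set t := h.choose
    rw [ht]
    by_cases hx : x = t
    · subst hx
      have hT : Tword (Aword (S t)) (Bword ((S t)ᶜ)) = true := by
        rw [Tword_iff_disjoint, Af_Aword, Bf_Bword]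
        exact disjoint_compl_right
      simp [hT]
    · have : ¬ Disjoint (S x) ((S t)ᶜ) := by
        rw [disjoint_compl_right_iff]
        intro hss
        exact hx (hSinj (Finset.eq_of_subset_of_card_le hss (by rw [hScard, hScard])))
      rw [← Af_Aword (S x), ← Bf_Bword ((S t)ᶜ), ← Tword_iff_disjoint] at this
      simp [hx, Bool.eq_false_iff, this]
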